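/- In a Hopf algebra H, a two-sided cointegral Λ (an element with xΛ = Λx = ε(x)Λ for all x) is unique up to scalar multiple: if Λ and Λ' are both nonzero two-sided cointegrals then Λ' = cΛ for some scalar c. -/

import Mathlib

open TensorProduct

section Aux

variable {H : Type*} [Ring H] [HopfAlgebra ℂ H]

/-- Contraction of the right tensor factor by a functional: `a ⊗ b ↦ f b • a`. -/
private noncomputable def cRc (f : H →ₗ[ℂ] ℂ) : H ⊗[ℂ] H →ₗ[ℂ] H :=
  (TensorProduct.rid ℂ H).toLinearMap ∘ₗ LinearMap.lTensor H f

@[simp] private lemma cRc_tmul (f : H →ₗ[ℂ] ℂ) (a b : H) :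
    cRc f (a ⊗ₜ[ℂ] b) = f b • a := by
  simp [cRc]

private lemma cRc_sum_apply {ι : Type*} (s : Finset ι) (g : ι → (H →ₗ[ℂ] ℂ))
    (u : H ⊗[ℂ] H) : cRc (∑ k ∈ s, g k) u = ∑ k ∈ s, cRc (g k) u := by
  induction u using TensorProduct.induction_on with
  | zero => simp
  | tmul a b => simp [LinearMap.sum_apply, Finset.sum_smul]
  | add u v hu hv => simp [hu, hv, Finset.sum_add_distrib]

/-- `cRc f (u * (x ⊗ 1)) = cRc f u * x`. -/
private lemma cRc_mul_tmul_one (f : H →ₗ[ℂ] ℂ) (x : H) (u : H ⊗[ℂ] H) :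
    cRc f (u * (x ⊗ₜ[ℂ] (1 : H))) = cRc f u * x := by
  induction u using TensorProduct.induction_on with
  | zero => simp
  | tmul a b => simp [Algebra.TensorProduct.tmul_mul_tmul, smul_mul_assoc]
  | add u v hu hv => simp [add_mul, hu, hv]

/-- `cRc f (u * (1 ⊗ y)) = cRc (f ∘ (·*y)) u`. -/
private lemma cRc_mul_one_tmul (f : H →ₗ[ℂ] ℂ) (y : H) (u : H ⊗[ℂ] H) :
    cRc f (u * ((1 : H) ⊗ₜ[ℂ] y)) = cRc (f ∘ₗ LinearMap.mulRight ℂ y) u := by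
  induction u using TensorProduct.induction_on with
  | zero => simp
  | tmul a b => simp [Algebra.TensorProduct.tmul_mul_tmul]
  | add u v hu hv => simp [add_mul, hu, hv]

private lemma counit_cRc (f : H →ₗ[ℂ] ℂ) (u : H ⊗[ℂ] H) :
    Coalgebra.counit (R := ℂ) (cRc f u) =
      f ((TensorProduct.lid ℂ H) (LinearMap.rTensor H (Coalgebra.counit (R := ℂ)) u)) := by
  induction u using TensorProduct.induction_on with
  | zero => simp
  | tmul a b => simp [mul_comm]
  | add u v hu hv => simp [hu, hv]

private lemma sum_counit_smul_right {x : H} {ι : Type*} (r : Coalgebra.Repr ℂ x ι) :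
    ∑ i ∈ r.index, Coalgebra.counit (R := ℂ) (r.left i) • r.right i = x := by
  have h := congrArg (TensorProduct.lid ℂ H) (Coalgebra.sum_counit_tmul_eq r)
  simp only [map_sum, TensorProduct.lid_tmul, one_smul] at h
  exact h

private lemma sum_counit_smul_left {x : H} {ι : Type*} (r : Coalgebra.Repr ℂ x ι) :
    ∑ i ∈ r.index, Coalgebra.counit (R := ℂ) (r.right i) • r.left i = x := by
  have h := congrArg (TensorProduct.rid ℂ H) (Coalgebra.sum_tmul_counit_eq r)
  simp only [map_sum, TensorProduct.rid_tmul, one_smul] at h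
  exact h

end Aux

/-- Key identity: for a right cointegral `Λ`, `ΔΛ · (x ⊗ 1) = ΔΛ · (1 ⊗ S x)`. -/
private lemma keyB {H : Type*} [Ring H] [HopfAlgebra ℂ H] (Λ : H)
    (hco' : ∀ x : H, Λ * x = Coalgebra.counit (R := ℂ) x • Λ) (x : H) :
    Coalgebra.comul (R := ℂ) Λ * (x ⊗ₜ[ℂ] (1 : H)) =
      Coalgebra.comul (R := ℂ) Λ *
        ((1 : H) ⊗ₜ[ℂ] HopfAlgebra.antipode (R := ℂ) x) := by
  set S : H →ₗ[ℂ] H := HopfAlgebra.antipode (R := ℂ) with hS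
  set t : H ⊗[ℂ] H := Coalgebra.comul (R := ℂ) Λ with ht
  have hdag : ∀ y : H, t * Coalgebra.comul (R := ℂ) y =
      Coalgebra.counit (R := ℂ) y • t := by
    intro y
    rw [ht, ← Bialgebra.comul_mul, hco' y, map_smul]
  set rx := Coalgebra.Repr.arbitrary ℂ x with hrx
  set ra : (i : H × H) → Coalgebra.Repr ℂ (rx.left i) (H × H) := fun i => Coalgebra.Repr.arbitrary ℂ (rx.left i) with hra
  set rb : (i : H × H) → Coalgebra.Repr ℂ (rx.right i) (H × H) := fun i => Coalgebra.Repr.arbitrary ℂ (rx.right i) with hrb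
  set G : H ⊗[ℂ] (H ⊗[ℂ] H) →ₗ[ℂ] H ⊗[ℂ] H :=
    LinearMap.mulLeft ℂ t ∘ₗ LinearMap.mul' ℂ (H ⊗[ℂ] H) ∘ₗ
      LinearMap.lTensor (H ⊗[ℂ] H) ((TensorProduct.mk ℂ H H 1) ∘ₗ S) ∘ₗ
      (TensorProduct.assoc ℂ H H H).symm.toLinearMap with hG
  have hGt : ∀ u v w : H,
      G (u ⊗ₜ[ℂ] (v ⊗ₜ[ℂ] w)) = t * ((u ⊗ₜ[ℂ] v) * ((1 : H) ⊗ₜ[ℂ] S w)) := by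
    intro u v w
    simp [hG, LinearMap.mul'_apply]
  have h0 := congrArg G (Coalgebra.sum_tmul_tmul_eq rx ra rb)
  simp only [map_sum] at h0
  -- left side of h0
  have hGL : ∀ i ∈ rx.index,
      ∑ j ∈ (ra i).index, G ((ra i).left j ⊗ₜ[ℂ] ((ra i).right j ⊗ₜ[ℂ] rx.right i)) =
        t * ((1 : H) ⊗ₜ[ℂ] S (Coalgebra.counit (R := ℂ) (rx.left i) • rx.right i)) := by
    intro i _
    calc ∑ j ∈ (ra i).index, G ((ra i).left j ⊗ₜ[ℂ] ((ra i).right j ⊗ₜ[ℂ] rx.right i))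
        = ∑ j ∈ (ra i).index,
            (t * ((ra i).left j ⊗ₜ[ℂ] (ra i).right j)) * ((1 : H) ⊗ₜ[ℂ] S (rx.right i)) := by
          refine Finset.sum_congr rfl fun j _ => ?_
          rw [hGt, mul_assoc]
      _ = (t * (∑ j ∈ (ra i).index, (ra i).left j ⊗ₜ[ℂ] (ra i).right j)) *
            ((1 : H) ⊗ₜ[ℂ] S (rx.right i)) := by
          rw [← Finset.sum_mul, ← Finset.mul_sum]
      _ = (Coalgebra.counit (R := ℂ) (rx.left i) • t) * ((1 : H) ⊗ₜ[ℂ] S (rx.right i)) := by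
          rw [(ra i).eq, hdag]
      _ = t * ((1 : H) ⊗ₜ[ℂ] S (Coalgebra.counit (R := ℂ) (rx.left i) • rx.right i)) := by
          rw [smul_mul_assoc, ← mul_smul_comm, ← tmul_smul, map_smul]
  -- right side of h0
  have hGR : ∀ i ∈ rx.index,
      ∑ j ∈ (rb i).index, G (rx.left i ⊗ₜ[ℂ] ((rb i).left j ⊗ₜ[ℂ] (rb i).right j)) =
        t * ((Coalgebra.counit (R := ℂ) (rx.right i) • rx.left i) ⊗ₜ[ℂ] (1 : H)) := by
    intro i _
    calc ∑ j ∈ (rb i).index, G (rx.left i ⊗ₜ[ℂ] ((rb i).left j ⊗ₜ[ℂ] (rb i).right j))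
        = ∑ j ∈ (rb i).index,
            t * (rx.left i ⊗ₜ[ℂ] ((rb i).left j * S ((rb i).right j))) := by
          refine Finset.sum_congr rfl fun j _ => ?_
          rw [hGt, Algebra.TensorProduct.tmul_mul_tmul, mul_one]
      _ = t * (rx.left i ⊗ₜ[ℂ] (∑ j ∈ (rb i).index, (rb i).left j * S ((rb i).right j))) := by
          rw [← Finset.mul_sum, ← tmul_sum]
      _ = t * (rx.left i ⊗ₜ[ℂ] (Coalgebra.counit (R := ℂ) (rx.right i) • (1 : H))) := by
          rw [HopfAlgebra.sum_mul_antipode_eq_smul (rb i)]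
      _ = t * ((Coalgebra.counit (R := ℂ) (rx.right i) • rx.left i) ⊗ₜ[ℂ] (1 : H)) := by
          rw [tmul_smul, smul_tmul']
  rw [Finset.sum_congr rfl hGL, Finset.sum_congr rfl hGR] at h0
  have hL : ∑ i ∈ rx.index,
      t * ((1 : H) ⊗ₜ[ℂ] S (Coalgebra.counit (R := ℂ) (rx.left i) • rx.right i)) =
      t * ((1 : H) ⊗ₜ[ℂ] S x) := by
    rw [← Finset.mul_sum, ← tmul_sum, ← map_sum, sum_counit_smul_right rx]
  have hR : ∑ i ∈ rx.index,
      t * ((Coalgebra.counit (R := ℂ) (rx.right i) • rx.left i) ⊗ₜ[ℂ] (1 : H)) =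
      t * (x ⊗ₜ[ℂ] (1 : H)) := by
    rw [← Finset.mul_sum, ← sum_tmul, sum_counit_smul_left rx]
  rw [hL, hR] at h0
  exact h0.symm


private lemma exists_lambda {H : Type*} [Ring H] [HopfAlgebra ℂ H] [FiniteDimensional ℂ H]
    (Λ : H) (hΛ : Λ ≠ 0)
    (hco' : ∀ x : H, Λ * x = Coalgebra.counit (R := ℂ) x • Λ) :
    ∃ l : H →ₗ[ℂ] ℂ, cRc l (Coalgebra.comul (R := ℂ) Λ) = 1 := by
  classical
  set S : H →ₗ[ℂ] H := HopfAlgebra.antipode (R := ℂ) with hS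
  set t : H ⊗[ℂ] H := Coalgebra.comul (R := ℂ) Λ with ht
  -- a functional with f₀ Λ = 1
  obtain ⟨f, hf⟩ : ∃ f : Module.Dual ℂ H, f Λ ≠ 0 := by
    by_contra h
    push_neg at h
    exact hΛ ((Module.forall_dual_apply_eq_zero_iff ℂ Λ).mp h)
  set f₀ : H →ₗ[ℂ] ℂ := (f Λ)⁻¹ • f with hf₀def
  have hf₀ : f₀ Λ = 1 := by
    simp [hf₀def, inv_mul_cancel₀ hf]
  set N : H →ₗ[ℂ] H := S ∘ₗ cRc f₀ ∘ₗ Coalgebra.comul (R := ℂ) with hN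
  set r := Coalgebra.Repr.arbitrary ℂ Λ with hr
  set ra : (i : H × H) → Coalgebra.Repr ℂ (r.left i) (H × H) :=
    fun i => Coalgebra.Repr.arbitrary ℂ (r.left i) with hra
  set rb : (i : H × H) → Coalgebra.Repr ℂ (r.right i) (H × H) :=
    fun i => Coalgebra.Repr.arbitrary ℂ (r.right i) with hrb
  -- The element E
  set E : H := ∑ i ∈ r.index, r.left i * N (r.right i) with hE
  -- Claim 1 : E = 1
  have hE1 : E = 1 := by
    set G₂ : H ⊗[ℂ] (H ⊗[ℂ] H) →ₗ[ℂ] H :=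
      LinearMap.mul' ℂ H ∘ₗ LinearMap.lTensor H (cRc f₀ ∘ₗ LinearMap.rTensor H S) with hG₂
    have hG2t : ∀ u v w : H,
        G₂ (u ⊗ₜ[ℂ] (v ⊗ₜ[ℂ] w)) = f₀ w • (u * S v) := by
      intro u v w
      simp [hG₂, LinearMap.mul'_apply, mul_smul_comm]
    have h0 := congrArg G₂ (Coalgebra.sum_tmul_tmul_eq r ra rb)
    simp only [map_sum] at h0
    have hGL : ∀ i ∈ r.index,
        ∑ j ∈ (ra i).index, G₂ ((ra i).left j ⊗ₜ[ℂ] ((ra i).right j ⊗ₜ[ℂ] r.right i)) =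
          f₀ (Coalgebra.counit (R := ℂ) (r.left i) • r.right i) • (1 : H) := by
      intro i _
      calc ∑ j ∈ (ra i).index, G₂ ((ra i).left j ⊗ₜ[ℂ] ((ra i).right j ⊗ₜ[ℂ] r.right i))
          = f₀ (r.right i) • ∑ j ∈ (ra i).index, (ra i).left j * S ((ra i).right j) := by
            rw [Finset.smul_sum]
            exact Finset.sum_congr rfl fun j _ => hG2t _ _ _
        _ = f₀ (r.right i) • (Coalgebra.counit (R := ℂ) (r.left i) • (1 : H)) := by
            rw [HopfAlgebra.sum_mul_antipode_eq_smul (ra i)]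
        _ = f₀ (Coalgebra.counit (R := ℂ) (r.left i) • r.right i) • (1 : H) := by
            rw [map_smul, smul_smul, smul_eq_mul, mul_comm]
    have hGR : ∀ i ∈ r.index,
        ∑ j ∈ (rb i).index, G₂ (r.left i ⊗ₜ[ℂ] ((rb i).left j ⊗ₜ[ℂ] (rb i).right j)) =
          r.left i * N (r.right i) := by
      intro i _
      calc ∑ j ∈ (rb i).index, G₂ (r.left i ⊗ₜ[ℂ] ((rb i).left j ⊗ₜ[ℂ] (rb i).right j))
          = r.left i * ∑ j ∈ (rb i).index, f₀ ((rb i).right j) • S ((rb i).left j) := by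
            rw [Finset.mul_sum]
            refine Finset.sum_congr rfl fun j _ => ?_
            rw [hG2t, mul_smul_comm]
        _ = r.left i * S (cRc f₀ (∑ j ∈ (rb i).index, (rb i).left j ⊗ₜ[ℂ] (rb i).right j)) := by
            rw [map_sum, map_sum]
            simp
        _ = r.left i * N (r.right i) := by
            rw [(rb i).eq, hN]
            rfl
    rw [Finset.sum_congr rfl hGL, Finset.sum_congr rfl hGR] at h0
    have hsum : ∑ i ∈ r.index,
        f₀ (Coalgebra.counit (R := ℂ) (r.left i) • r.right i) • (1 : H) = 1 := by
      rw [← Finset.sum_smul, ← map_sum, sum_counit_smul_right r, hf₀, one_smul]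
    rw [hsum] at h0
    rw [hE, ← h0]
  -- Claim 2 : E = cRc l t for an explicit l
  set b := Module.finBasis ℂ H with hb
  set l : H →ₗ[ℂ] ℂ :=
    ∑ k, ((b.coord k ∘ₗ N) ∘ₗ LinearMap.mulRight ℂ (S (b k))) with hl
  refine ⟨l, ?_⟩
  have hcRt : ∀ g : H →ₗ[ℂ] ℂ, cRc g t = ∑ i ∈ r.index, g (r.right i) • r.left i := by
    intro g
    rw [ht, ← r.eq, map_sum]
    simp
  have hE2 : E = cRc l t := by
    calc E = ∑ i ∈ r.index, ∑ k, (b.coord k) (N (r.right i)) • (r.left i * b k) := by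
          refine Finset.sum_congr rfl fun i _ => ?_
          conv_lhs => rw [← b.sum_repr (N (r.right i))]
          rw [Finset.mul_sum]
          refine Finset.sum_congr rfl fun k _ => ?_
          rw [mul_smul_comm]
          rfl
      _ = ∑ k, ∑ i ∈ r.index, (b.coord k) (N (r.right i)) • (r.left i * b k) :=
          Finset.sum_comm
      _ = ∑ k, (cRc (b.coord k ∘ₗ N) t) * b k := by
          refine Finset.sum_congr rfl fun k _ => ?_
          rw [hcRt, Finset.sum_mul]
          refine Finset.sum_congr rfl fun i _ => ?_
          rw [smul_mul_assoc]
          rfl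
      _ = ∑ k, cRc ((b.coord k ∘ₗ N) ∘ₗ LinearMap.mulRight ℂ (S (b k))) t := by
          refine Finset.sum_congr rfl fun k _ => ?_
          rw [← cRc_mul_tmul_one, keyB Λ hco' (b k), cRc_mul_one_tmul]
      _ = cRc l t := by
          rw [hl, cRc_sum_apply]
  rw [← hE2, hE1]

/-- In a finite-dimensional Hopf algebra `H` over `ℂ`, a two-sided
cointegral (an element `Λ` with `x*Λ = Λ*x = ε(x)•Λ` for all `x`) is unique up to a
scalar multiple: if `Λ` and `Λ'` are both nonzero two-sided cointegrals then
`Λ' = c • Λ` for some scalar `c`. -/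
theorem cointegral_unique_up_to_scalar {H : Type*} [Ring H] [HopfAlgebra ℂ H]
    [FiniteDimensional ℂ H]
    (Λ Λ' : H) (hΛ : Λ ≠ 0) (hΛ' : Λ' ≠ 0)
    (hco : ∀ x : H, x * Λ = Coalgebra.counit (R := ℂ) x • Λ)
    (hco' : ∀ x : H, Λ * x = Coalgebra.counit (R := ℂ) x • Λ)
    (hco2 : ∀ x : H, x * Λ' = Coalgebra.counit (R := ℂ) x • Λ')
    (hco2' : ∀ x : H, Λ' * x = Coalgebra.counit (R := ℂ) x • Λ') :
    ∃ c : ℂ, Λ' = c • Λ := by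
  set S : H →ₗ[ℂ] H := HopfAlgebra.antipode (R := ℂ) with hS
  set t : H ⊗[ℂ] H := Coalgebra.comul (R := ℂ) Λ with ht
  obtain ⟨l, hl⟩ := exists_lambda Λ hΛ hco'
  -- collapsing against a left cointegral
  have hL9 : ∀ y : H, (∀ x : H, x * y = Coalgebra.counit (R := ℂ) x • y) →
      ∀ u : H ⊗[ℂ] H, u * ((1 : H) ⊗ₜ[ℂ] y) =
        cRc (Coalgebra.counit (R := ℂ)) u ⊗ₜ[ℂ] y := by
    intro y hy u
    induction u using TensorProduct.induction_on with
    | zero => simp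
    | tmul a b =>
        rw [Algebra.TensorProduct.tmul_mul_tmul, mul_one, hy b, cRc_tmul,
          tmul_smul, smul_tmul']
    | add u v hu hv => rw [add_mul, hu, hv, map_add, add_tmul]
  have hcRt_counit : cRc (Coalgebra.counit (R := ℂ)) t = Λ := by
    rw [ht]
    simp [cRc]
  have hR1 : ∀ x : H, cRc l (t * ((1 : H) ⊗ₜ[ℂ] S x)) = x := by
    intro x
    rw [← keyB Λ hco' x, cRc_mul_tmul_one, hl, one_mul]
  have hinj : Function.Injective S := by
    intro x y hxy
    have h1 := hR1 x
    rw [hxy, hR1 y] at h1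
    exact h1.symm
  have hsurj := LinearMap.injective_iff_surjective.mp hinj
  have hlΛ : l Λ = 1 := by
    have h := congrArg (Coalgebra.counit (R := ℂ)) hl
    rw [counit_cRc] at h
    simpa using h
  obtain ⟨x₁, hx₁⟩ := hsurj Λ
  have h1 : x₁ = Λ := by
    have h := hR1 x₁
    rw [hx₁, hL9 Λ hco t, hcRt_counit, cRc_tmul, hlΛ, one_smul] at h
    exact h.symm
  have hSΛ : S Λ = Λ := by rw [h1] at hx₁; exact hx₁
  obtain ⟨x₀, hx₀⟩ := hsurj Λ'
  refine ⟨l Λ', ?_⟩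
  have h0 : x₀ = l Λ' • Λ := by
    have h := hR1 x₀
    rw [hx₀, hL9 Λ' hco2 t, hcRt_counit, cRc_tmul] at h
    exact h.symm
  calc Λ' = S x₀ := hx₀.symm
    _ = l Λ' • S Λ := by rw [h0, map_smul]
    _ = l Λ' • Λ := by rw [hSΛ]
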